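/- Let N ≥ 0 and let (H_k) be a sequence of positive definite Hermitian (N+1)×(N+1) complex matrices whose underlying set is bounded, with constants γ_k = γ_{H_k}. Then there is a subsequence (H_{n_k}) such that the normalized sequence γ_{n_k}^{-1}·H_{n_k} converges (entrywise) to a positive definite Hermitian matrix. -/

import Mathlib

open scoped ComplexOrder

open Matrix

variable {n : Type*} [Fintype n] [DecidableEq n]

lemma spectral_sub (A : Matrix n n ℂ) (hA : A.IsHermitian) (c : ℝ) :
    A - (c : ℂ) • 1 = (hA.eigenvectorUnitary : Matrix n n ℂ) *
      Matrix.diagonal (fun i => ((hA.eigenvalues i - c : ℝ) : ℂ)) *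
      star (hA.eigenvectorUnitary : Matrix n n ℂ) := by
  have hU : (hA.eigenvectorUnitary : Matrix n n ℂ) *
      star (hA.eigenvectorUnitary : Matrix n n ℂ) = 1 :=
    Matrix.mem_unitaryGroup_iff.mp hA.eigenvectorUnitary.2
  have hdiag : Matrix.diagonal (fun i => ((hA.eigenvalues i - c : ℝ) : ℂ)) =
      Matrix.diagonal (RCLike.ofReal ∘ hA.eigenvalues) - (c : ℂ) • 1 := by
    rw [Matrix.smul_one_eq_diagonal, Matrix.diagonal_sub]
    congr 1
    funext i
    push_cast
    rfl
  conv_lhs => rw [hA.spectral_theorem]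
  rw [hdiag, Matrix.mul_sub, Matrix.sub_mul, Matrix.mul_smul, Matrix.mul_one,
    Matrix.smul_mul, hU]
  rfl

lemma posSemidef_sub_smul (A : Matrix n n ℂ) (hA : A.IsHermitian) (c : ℝ)
    (h : ∀ i, c ≤ hA.eigenvalues i) : (A - (c : ℂ) • 1).PosSemidef := by
  rw [spectral_sub A hA c]
  exact (Matrix.posSemidef_diagonal_iff.mpr fun i =>
    Complex.zero_le_real.mpr (sub_nonneg.mpr (h i))).mul_mul_conjTranspose_same _

lemma posSemidef_smul_sub (A : Matrix n n ℂ) (hA : A.IsHermitian) (c : ℝ)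
    (h : ∀ i, hA.eigenvalues i ≤ c) : ((c : ℂ) • 1 - A).PosSemidef := by
  have h2 : Matrix.diagonal (fun i => ((c - hA.eigenvalues i : ℝ) : ℂ)) =
      - Matrix.diagonal (fun i => ((hA.eigenvalues i - c : ℝ) : ℂ)) := by
    ext i j
    by_cases hij : i = j <;>
      simp [Matrix.diagonal, hij, Complex.ofReal_sub, sub_eq_neg_add, neg_add_rev]
  have h1 : (c : ℂ) • 1 - A = (hA.eigenvectorUnitary : Matrix n n ℂ) *
      Matrix.diagonal (fun i => ((c - hA.eigenvalues i : ℝ) : ℂ)) *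
      star (hA.eigenvectorUnitary : Matrix n n ℂ) := by
    rw [h2, Matrix.mul_neg, Matrix.neg_mul, ← spectral_sub A hA c, neg_sub]
  rw [h1]
  exact (Matrix.posSemidef_diagonal_iff.mpr fun i =>
    Complex.zero_le_real.mpr (sub_nonneg.mpr (h i))).mul_mul_conjTranspose_same _

lemma psd_smul {M : Matrix n n ℂ} (hM : M.PosSemidef) {c : ℝ} (hc : 0 ≤ c) :
    ((c : ℂ) • M).PosSemidef := by
  refine Matrix.PosSemidef.of_dotProduct_mulVec_nonneg ?_ fun x => ?_
  · unfold Matrix.IsHermitian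
    rw [Matrix.conjTranspose_smul, hM.1.eq, Complex.star_def, Complex.conj_ofReal]
  · rw [Matrix.smul_mulVec, dotProduct_smul, smul_eq_mul]
    exact mul_nonneg (Complex.zero_le_real.mpr hc) (hM.dotProduct_mulVec_nonneg x)

lemma quad_single (B : Matrix n n ℂ) (i : n) :
    dotProduct (star (Pi.single i 1)) (B *ᵥ Pi.single i 1) = B i i := by
  simp [dotProduct, Matrix.mulVec, Pi.single_apply, Finset.mul_sum,
    apply_ite, Finset.sum_ite_eq]

/-- A bounded sequence `(H_k)` of positive definite Hermitian
`(N+1)×(N+1)` complex matrices (with constants `γ_k`) has a subsequence such that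
`γ_{n_k}⁻¹ • H_{n_k}` converges entrywise to a positive definite Hermitian matrix. -/
theorem bounded_sequence_has_convergent_normalized_subsequence
    (N : ℕ) (H : ℕ → Matrix (Fin (N + 1)) (Fin (N + 1)) ℂ)
    (hpd : ∀ k, (H k).PosDef)
    (R : ℝ) (hR : 1 < R) (γ : ℕ → ℝ) (hγ : ∀ k, 0 < γ k)
    (hbd : ∀ k i, γ k / R ≤ (hpd k).1.eigenvalues i ∧ (hpd k).1.eigenvalues i ≤ γ k * R) :
    ∃ n : ℕ → ℕ, StrictMono n ∧
      ∃ L : Matrix (Fin (N + 1)) (Fin (N + 1)) ℂ, L.PosDef ∧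
        Filter.Tendsto (fun k => (γ (n k))⁻¹ • H (n k)) Filter.atTop (nhds L) := by
  classical
  have hR0 : (0:ℝ) < R := lt_trans one_pos hR
  set M : ℕ → Matrix (Fin (N + 1)) (Fin (N + 1)) ℂ :=
    fun k => (((γ k)⁻¹ : ℝ) : ℂ) • H k with hMdef
  have hsm : ∀ k, (γ k)⁻¹ • H k = M k := by
    intro k
    rw [hMdef, RCLike.real_smul_eq_coe_smul (K := ℂ)]
    rfl
  -- lower bound PSD
  have hlow : ∀ k, (M k - ((R⁻¹ : ℝ) : ℂ) • 1).PosSemidef := by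
    intro k
    have h1 := posSemidef_sub_smul (H k) (hpd k).1 (γ k / R) (fun i => (hbd k i).1)
    have h2 := psd_smul h1 (le_of_lt (inv_pos.mpr (hγ k)))
    have h3 : (((γ k)⁻¹ : ℝ) : ℂ) • (H k - ((γ k / R : ℝ) : ℂ) • 1)
        = M k - ((R⁻¹ : ℝ) : ℂ) • 1 := by
      have hγ' : ((γ k : ℝ) : ℂ) ≠ 0 := by
        exact_mod_cast (hγ k).ne'
      have hR' : ((R : ℝ) : ℂ) ≠ 0 := by
        exact_mod_cast hR0.ne'
      rw [smul_sub, smul_smul, hMdef]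
      congr 2
      push_cast
      field_simp
    rwa [h3] at h2
  have hup : ∀ k, (((R : ℝ) : ℂ) • 1 - M k).PosSemidef := by
    intro k
    have h1 := posSemidef_smul_sub (H k) (hpd k).1 (γ k * R) (fun i => (hbd k i).2)
    have h2 := psd_smul h1 (le_of_lt (inv_pos.mpr (hγ k)))
    have h3 : (((γ k)⁻¹ : ℝ) : ℂ) • (((γ k * R : ℝ) : ℂ) • 1 - H k)
        = ((R : ℝ) : ℂ) • 1 - M k := by
      have hγ' : ((γ k : ℝ) : ℂ) ≠ 0 := by
        exact_mod_cast (hγ k).ne'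
      rw [smul_sub, smul_smul, hMdef]
      congr 2
      push_cast
      field_simp
    rwa [h3] at h2
  have hpsdM : ∀ k, (M k).PosSemidef :=
    fun k => psd_smul (hpd k).posSemidef (le_of_lt (inv_pos.mpr (hγ k)))
  -- diagonal entry bounds
  have hdiag_le : ∀ k i, (M k i i).re ≤ R := by
    intro k i
    have h1 := (hup k).dotProduct_mulVec_nonneg (Pi.single i 1)
    rw [quad_single] at h1
    have h2 : ((((R:ℝ):ℂ) • 1 - M k) i i) = (R:ℂ) - M k i i := by
      simp [Matrix.sub_apply, Matrix.smul_apply, Matrix.one_apply_eq]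
    rw [h2] at h1
    have := (Complex.le_def.mp h1).1
    simpa using this
  -- entrywise bound
  have hent : ∀ k i j, ‖M k i j‖ ≤ R := by
    intro k i j
    obtain ⟨B, hB⟩ : ∃ B : Matrix (Fin (N + 1)) (Fin (N + 1)) ℂ, M k = Bᴴ * B := by
      open scoped MatrixOrder in
      obtain ⟨B, hB⟩ := CStarAlgebra.nonneg_iff_eq_star_mul_self.mp (hpsdM k).nonneg
      exact ⟨B, hB⟩
    set v : Fin (N + 1) → EuclideanSpace ℂ (Fin (N + 1)) := fun p => WithLp.toLp 2 (fun a => B a p) with hv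
    have hinner : ∀ p q, (inner ℂ (v p) (v q) : ℂ) = M k p q := by
      intro p q
      rw [hB]
      simp [PiLp.inner_apply, RCLike.inner_apply, Matrix.mul_apply,
        Matrix.conjTranspose_apply, hv]
      exact Finset.sum_congr rfl fun _ _ => mul_comm _ _
    have hnorm : ∀ p, ‖v p‖ ≤ Real.sqrt R := by
      intro p
      have h1 : (‖v p‖ : ℝ) ^ 2 = (M k p p).re := by
        rw [← hinner p p, ← RCLike.re_to_complex]
        exact norm_sq_eq_re_inner (𝕜 := ℂ) (v p)
      have h2 : ‖v p‖ ^ 2 ≤ R := h1 ▸ hdiag_le k p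
      have := Real.sqrt_le_sqrt h2
      rwa [Real.sqrt_sq (norm_nonneg _)] at this
    have hcs : ‖(inner ℂ (v i) (v j) : ℂ)‖ ≤ ‖v i‖ * ‖v j‖ := norm_inner_le_norm _ _
    rw [hinner i j] at hcs
    calc ‖M k i j‖ = ‖M k i j‖ := rfl
      _ ≤ ‖v i‖ * ‖v j‖ := hcs
      _ ≤ Real.sqrt R * Real.sqrt R :=
          mul_le_mul (hnorm i) (hnorm j) (norm_nonneg _) (Real.sqrt_nonneg _)
      _ = R := Real.mul_self_sqrt (le_of_lt hR0)
  -- compactness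
  set s : Set (Matrix (Fin (N + 1)) (Fin (N + 1)) ℂ) :=
    Set.univ.pi (fun _ : Fin (N + 1) => Set.univ.pi fun _ : Fin (N + 1) =>
      Metric.closedBall (0 : ℂ) R) with hs
  have hscomp : IsCompact s :=
    isCompact_univ_pi fun _ => isCompact_univ_pi fun _ => isCompact_closedBall _ _
  have hmem : ∀ k, M k ∈ s := by
    intro k
    simp only [hs, Set.mem_pi, Set.mem_univ, forall_true_left, Metric.mem_closedBall]
    intro i _ j _
    simpa [Complex.dist_eq] using hent k i j
  letI : FirstCountableTopology (Matrix (Fin (N + 1)) (Fin (N + 1)) ℂ) :=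
    inferInstanceAs (FirstCountableTopology (Fin (N + 1) → Fin (N + 1) → ℂ))
  obtain ⟨L, hLs, φ, hφ, hconv⟩ := hscomp.tendsto_subseq hmem
  -- Hermitian limit
  have hherm : L.IsHermitian := by
    have hc : Continuous fun X : Matrix (Fin (N + 1)) (Fin (N + 1)) ℂ => Xᴴ :=
      continuous_id.matrix_conjTranspose
    have h1 : Filter.Tendsto (fun k => (M (φ k))ᴴ) Filter.atTop (nhds Lᴴ) :=
      (hc.tendsto L).comp hconv
    have h2 : (fun k => (M (φ k))ᴴ) = fun k => M (φ k) :=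
      funext fun k => (hpsdM (φ k)).1
    rw [h2] at h1
    exact tendsto_nhds_unique h1 hconv
  -- positivity of limit
  have hpos : ∀ x : Fin (N + 1) → ℂ, x ≠ 0 →
      0 < dotProduct (star x) (L *ᵥ x) := by
    intro x hx
    have hxx : 0 < dotProduct (star x) x := by
      have := (Matrix.PosDef.one (n := Fin (N + 1)) (R := ℂ)).dotProduct_mulVec_pos hx
      simpa [Matrix.one_mulVec] using this
    set c0 : ℂ := ((R⁻¹ : ℝ) : ℂ) * dotProduct (star x) x with hc0
    have hc0pos : 0 < c0 :=
      mul_pos (Complex.zero_lt_real.mpr (inv_pos.mpr hR0)) hxx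
    have hqk : ∀ k, c0 ≤ dotProduct (star x) (M k *ᵥ x) := by
      intro k
      have h1 := (hlow k).dotProduct_mulVec_nonneg x
      rw [Matrix.sub_mulVec, dotProduct_sub, sub_nonneg] at h1
      have h2 : dotProduct (star x) ((((R⁻¹:ℝ):ℂ) • 1) *ᵥ x) = c0 := by
        rw [Matrix.smul_mulVec, dotProduct_smul, Matrix.one_mulVec, hc0,
          smul_eq_mul]
      rwa [h2] at h1
    -- quadratic form is continuous in the matrix
    have hcq : Continuous fun X : Matrix (Fin (N + 1)) (Fin (N + 1)) ℂ =>
        dotProduct (star x) (X *ᵥ x) :=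
      (continuous_const).dotProduct (continuous_id.matrix_mulVec continuous_const)
    have hq : Filter.Tendsto (fun k => dotProduct (star x) (M (φ k) *ᵥ x))
        Filter.atTop (nhds (dotProduct (star x) (L *ᵥ x))) :=
      (hcq.tendsto L).comp hconv
    set Q := dotProduct (star x) (L *ᵥ x)
    have hre : c0.re ≤ Q.re := by
      have h1 : Filter.Tendsto (fun k => (dotProduct (star x) (M (φ k) *ᵥ x)).re)
          Filter.atTop (nhds Q.re) := (Complex.continuous_re.tendsto Q).comp hq
      exact ge_of_tendsto h1 (Filter.Eventually.of_forall fun k =>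
        (Complex.le_def.mp (hqk (φ k))).1)
    have him : Q.im = 0 := by
      have h1 : Filter.Tendsto (fun k => (dotProduct (star x) (M (φ k) *ᵥ x)).im)
          Filter.atTop (nhds Q.im) := (Complex.continuous_im.tendsto Q).comp hq
      have h2 : (fun k => (dotProduct (star x) (M (φ k) *ᵥ x)).im) = fun _ => (0:ℝ) := by
        funext k
        have := (Complex.le_def.mp (hqk (φ k))).2
        have hcim : c0.im = 0 := (Complex.lt_def.mp hc0pos).2.symm
        rw [← this, hcim]
      rw [h2] at h1
      exact tendsto_nhds_unique h1 tendsto_const_nhds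
    rw [Complex.lt_def]
    constructor
    · have hc0re : 0 < c0.re := (Complex.lt_def.mp hc0pos).1
      simpa using lt_of_lt_of_le hc0re hre
    · simpa using him.symm
  refine ⟨φ, hφ, L, Matrix.PosDef.of_dotProduct_mulVec_pos hherm hpos, ?_⟩
  have : (fun k => (γ (φ k))⁻¹ • H (φ k)) = fun k => M (φ k) :=
    funext fun k => hsm (φ k)
  rw [this]
  exact hconv
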